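/- For each η, d > 0 there exist C, c > 0 such that the following holds with probability tending to 1 as n → ∞, where G = G(n,p) with p ≥ C/n: (1) every subgraph G' ⊆ G with minimum degree δ(G') ≥ ηpn is a (cn, d)-expander; and (2) every bipartite subgraph G' ⊆ G with δ(G') ≥ ηpn is a (cn, d)-bipartite-expander. -/

import Mathlib

open MeasureTheory
open scoped Classical

/-- Bernoulli measure on `Bool` with parameter `p` (capped into `[0,1]`). -/
noncomputable def bernoulliBool (p : ℝ) : Measure Bool :=
  (PMF.bernoulli (min (Real.toNNReal p) 1) (min_le_right _ _)).toMeasure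

instance (p : ℝ) : IsProbabilityMeasure (bernoulliBool p) :=
  PMF.toMeasure.isProbabilityMeasure _

/-- The Erdős–Rényi random graph measure: each unordered pair of vertices of `Fin N`
is an edge independently with probability `p`. -/
noncomputable def gnp (N : ℕ) (p : ℝ) : Measure (Sym2 (Fin N) → Bool) :=
  Measure.pi fun _ => bernoulliBool p

/-- The simple graph determined by an outcome `ω`. -/
def graphOf {N : ℕ} (ω : Sym2 (Fin N) → Bool) : SimpleGraph (Fin N) :=
  SimpleGraph.fromEdgeSet {e | ω e = true}

/-- `r(n)`: the cycle Ramsey number, `2n-1` for odd `n` and `3n/2 - 1` for even `n`. -/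
def cycleRamsey (n : ℕ) : ℕ := if Odd n then 2 * n - 1 else 3 * n / 2 - 1

/-- `G` contains a cycle of length `ℓ`. -/
def hasCycle {V : Type*} (G : SimpleGraph V) (ℓ : ℕ) : Prop :=
  ∃ (v : V) (w : G.Walk v v), w.IsCycle ∧ w.length = ℓ

/-- The colouring `c` of the edges of `G` admits a monochromatic cycle of length `n`. -/
def hasMonoCycle {V : Type*} (G : SimpleGraph V) (c : Sym2 V → Bool) (n : ℕ) : Prop :=
  ∃ (b : Bool) (v : V) (w : G.Walk v v),
    w.IsCycle ∧ w.length = n ∧ ∀ e ∈ w.edges, c e = b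
/-- The external neighbourhood of `S` in `G`: vertices outside `S` with a neighbour in `S`. -/
noncomputable def extNbhd {V : Type*} [Fintype V] (G : SimpleGraph V) (S : Finset V) :
    Finset V :=
  Finset.univ.filter fun v => v ∉ S ∧ ∃ u ∈ S, G.Adj u v

/-- The graph `H`, with vertex set `S`, is an `(m,d)`-expander: every nonempty `T ⊆ S` with
`|T| ≤ m` satisfies `|N(T)| ≥ d|T|`. -/
noncomputable def IsExpanderOn {V : Type*} [Fintype V] (H : SimpleGraph V) (S : Finset V)
    (m d : ℝ) : Prop :=
  ∀ T : Finset V, T ⊆ S → T.Nonempty → (T.card : ℝ) ≤ m →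
    d * T.card ≤ ((extNbhd H T).card : ℝ)

/-- The bipartite graph `H`, with parts `V1`, `V2`, is an `(m,d)`-bipartite-expander. -/
noncomputable def IsBipExpanderOn {V : Type*} [Fintype V] (H : SimpleGraph V)
    (V1 V2 : Finset V) (m d : ℝ) : Prop :=
  ∀ T : Finset V, (T ⊆ V1 ∨ T ⊆ V2) → T.Nonempty → (T.card : ℝ) ≤ m →
    d * T.card ≤ ((extNbhd H T).card : ℝ)

open scoped ENNReal

-- numeric lemma 1: (k:ℝ)^k ≤ 3^k * k!
lemma pow_self_le_three_pow_mul_factorial (k : ℕ) : (k:ℝ)^k ≤ 3^k * (Nat.factorial k) := by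
  induction k with
  | zero => simp
  | succ k ih =>
    have hstep : ((k:ℝ)+1)^k ≤ 3 * (k:ℝ)^k := by
      rcases Nat.eq_zero_or_pos k with rfl | hk
      · norm_num
      · have hk0 : (0:ℝ) < k := by exact_mod_cast hk
        have h1 : (k:ℝ)+1 ≤ (k:ℝ) * Real.exp (1/(k:ℝ)) := by
          have := Real.add_one_le_exp (1/(k:ℝ))
          calc (k:ℝ)+1 = (k:ℝ) * (1/(k:ℝ) + 1) := by field_simp; ring
            _ ≤ (k:ℝ) * Real.exp (1/(k:ℝ)) := by
                apply mul_le_mul_of_nonneg_left this hk0.le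
        have h2 : ((k:ℝ)+1)^k ≤ ((k:ℝ) * Real.exp (1/(k:ℝ)))^k :=
          pow_le_pow_left₀ (by positivity) h1 k
        have h3 : ((k:ℝ) * Real.exp (1/(k:ℝ)))^k = (k:ℝ)^k * Real.exp (1/(k:ℝ))^k := mul_pow _ _ _
        have h4 : Real.exp (1/(k:ℝ))^k = Real.exp ((k:ℝ) * (1/(k:ℝ))) := by
          rw [← Real.exp_nat_mul]
        have h5 : (k:ℝ) * (1/(k:ℝ)) = 1 := by field_simp
        have h6 : Real.exp 1 ≤ 3 := by
          have := Real.exp_one_lt_d9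
          linarith
        calc ((k:ℝ)+1)^k ≤ (k:ℝ)^k * Real.exp 1 := by rw [h3, h4, h5] at h2; exact h2
          _ ≤ (k:ℝ)^k * 3 := by
              apply mul_le_mul_of_nonneg_left h6 (by positivity)
          _ = 3 * (k:ℝ)^k := by ring
    have hk1 : (0:ℝ) ≤ (k:ℝ)+1 := by positivity
    calc ((k+1:ℕ):ℝ)^(k+1) = ((k:ℝ)+1) * ((k:ℝ)+1)^k := by push_cast; ring
      _ ≤ ((k:ℝ)+1) * (3 * (k:ℝ)^k) := mul_le_mul_of_nonneg_left hstep hk1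
      _ ≤ ((k:ℝ)+1) * (3 * (3^k * (Nat.factorial k))) := by
          apply mul_le_mul_of_nonneg_left _ hk1
          apply mul_le_mul_of_nonneg_left ih (by norm_num)
      _ = 3^(k+1) * (((k:ℝ)+1) * (Nat.factorial k)) := by ring
      _ = 3^(k+1) * (Nat.factorial (k+1)) := by
          rw [Nat.factorial_succ]; push_cast; ring

-- choose bound
lemma choose_mul_pow_le (M k : ℕ) : (M.choose k : ℝ) * (k:ℝ)^k ≤ (3*M)^k := by
  have h1 : (M.choose k : ℝ) ≤ (M:ℝ)^k / (Nat.factorial k) := Nat.choose_le_pow_div k M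
  have h2 := pow_self_le_three_pow_mul_factorial k
  have hf : (0:ℝ) < (Nat.factorial k) := by exact_mod_cast Nat.factorial_pos k
  calc (M.choose k : ℝ) * (k:ℝ)^k ≤ ((M:ℝ)^k / (Nat.factorial k)) * (3^k * (Nat.factorial k)) := by
        apply mul_le_mul h1 h2 (by positivity) (by positivity)
    _ = (M:ℝ)^k * 3^k := by field_simp
    _ = (3*M)^k := by rw [mul_pow]; ring

lemma bernoulliBool_true (p : ℝ) (hp1 : p ≤ 1) :
    bernoulliBool p {true} = ENNReal.ofReal p := by
  rw [bernoulliBool, PMF.toMeasure_apply_singleton _ _ (measurableSet_singleton _)]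
  have : min (Real.toNNReal p) 1 = Real.toNNReal p := by
    apply min_eq_left
    simpa using Real.toNNReal_le_toNNReal hp1
  simp [PMF.bernoulli_apply, this, ENNReal.ofReal]

lemma cyl_measure (n : ℕ) (p : ℝ) (hp1 : p ≤ 1) (E : Finset (Sym2 (Fin n))) :
    gnp n p {ω | ∀ e ∈ E, ω e = true} ≤ ENNReal.ofReal p ^ E.card := by
  have hset : {ω : Sym2 (Fin n) → Bool | ∀ e ∈ E, ω e = true} =
      Set.pi Set.univ (fun e => if e ∈ E then ({true} : Set Bool) else Set.univ) := by
    ext ω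
    simp only [Set.mem_setOf_eq, Set.mem_pi, Set.mem_univ, forall_true_left]
    constructor
    · intro h e
      by_cases he : e ∈ E <;> simp [he, h e]
    · intro h e he
      have := h e
      simp [he] at this
      exact this
  rw [hset, gnp, Measure.pi_pi]
  have : ∀ e : Sym2 (Fin n), bernoulliBool p (if e ∈ E then ({true} : Set Bool) else Set.univ)
      = if e ∈ E then ENNReal.ofReal p else 1 := by
    intro e
    by_cases he : e ∈ E
    · rw [if_pos he, if_pos he, bernoulliBool_true p hp1]
    · rw [if_neg he, if_neg he]; exact measure_univ
  rw [Finset.prod_congr rfl (fun e _ => this e), Finset.prod_ite_mem, Finset.univ_inter,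
    Finset.prod_const]

/-- edges of `ω` with both (distinct) endpoints inside `U`. -/
noncomputable def edgesIn {n : ℕ} (ω : Sym2 (Fin n) → Bool) (U : Finset (Fin n)) :
    Finset (Sym2 (Fin n)) :=
  Finset.univ.filter fun e => ω e = true ∧ ¬ e.IsDiag ∧ ∀ x ∈ e, x ∈ U

/-- all potential edges inside `U`. -/
noncomputable def pairsIn {n : ℕ} (U : Finset (Fin n)) : Finset (Sym2 (Fin n)) :=
  Finset.univ.filter fun e => ¬ e.IsDiag ∧ ∀ x ∈ e, x ∈ U

lemma edgesIn_subset_pairsIn {n : ℕ} (ω : Sym2 (Fin n) → Bool) (U : Finset (Fin n)) :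
    edgesIn ω U ⊆ pairsIn U := by
  intro e he
  simp only [edgesIn, pairsIn, Finset.mem_filter] at *
  tauto

lemma pairsIn_card_le {n : ℕ} (U : Finset (Fin n)) :
    (pairsIn U).card ≤ U.card * U.card := by
  have h : pairsIn U ⊆ (U ×ˢ U).image (fun q : Fin n × Fin n => s(q.1, q.2)) := by
    intro e he
    induction e with
    | _ a b =>
      simp only [pairsIn, Finset.mem_filter] at he
      have ha : a ∈ U := he.2.2 a (by simp)
      have hb : b ∈ U := he.2.2 b (by simp)
      exact Finset.mem_image.2 ⟨(a, b), Finset.mem_product.2 ⟨ha, hb⟩, rfl⟩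
  calc (pairsIn U).card ≤ ((U ×ˢ U).image (fun q : Fin n × Fin n => s(q.1, q.2))).card :=
        Finset.card_le_card h
    _ ≤ (U ×ˢ U).card := Finset.card_image_le
    _ = U.card * U.card := Finset.card_product U U

/-- Handshake-type bound: sum of degrees over T is at most twice the edges in U,
whenever all H-neighbours of T lie in U and T ⊆ U. -/
lemma sum_degree_le {n : ℕ} (ω : Sym2 (Fin n) → Bool) (H : SimpleGraph (Fin n))
    (hH : H ≤ graphOf ω) (T U : Finset (Fin n)) (hTU : T ⊆ U)
    (hN : ∀ v ∈ T, ∀ w, H.Adj v w → w ∈ U) :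
    ∑ v ∈ T, H.degree v ≤ 2 * (edgesIn ω U).card := by
  classical
  set F := T.sigma (fun v => H.neighborFinset v) with hF
  have hcard : F.card = ∑ v ∈ T, H.degree v := by
    rw [hF, Finset.card_sigma]
    rfl
  set f : (Σ _ : Fin n, Fin n) → Sym2 (Fin n) := fun x => s(x.1, x.2) with hf
  have himg : F.image f ⊆ edgesIn ω U := by
    intro e he
    obtain ⟨x, hx, rfl⟩ := Finset.mem_image.1 he
    obtain ⟨v, w⟩ := x
    simp only [hF, Finset.mem_sigma, SimpleGraph.mem_neighborFinset] at hx
    obtain ⟨hvT, hadj⟩ := hx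
    have hGadj : (graphOf ω).Adj v w := hH hadj
    rw [graphOf, SimpleGraph.fromEdgeSet_adj] at hGadj
    simp only [edgesIn, Finset.mem_filter, Finset.mem_univ, true_and]
    refine ⟨hGadj.1, ?_, ?_⟩
    · rw [Sym2.mk_isDiag_iff]; exact hadj.ne
    · intro x hx
      rw [Sym2.mem_iff] at hx
      rcases hx with rfl | rfl
      · exact hTU hvT
      · exact hN v hvT x hadj
  have hfib : ∀ e ∈ F.image f, (F.filter fun x => f x = e).card ≤ 2 := by
    intro e _
    induction e with
    | _ a b =>
      have hsub : (F.filter fun x => f x = s(a, b)) ⊆ {⟨a, b⟩, ⟨b, a⟩} := by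
        intro x hx
        obtain ⟨v, w⟩ := x
        simp only [Finset.mem_filter, hf] at hx
        have := hx.2
        rw [Sym2.eq_iff] at this
        rcases this with ⟨rfl, rfl⟩ | ⟨rfl, rfl⟩
        · simp
        · simp
      calc (F.filter fun x => f x = s(a, b)).card ≤ ({⟨a, b⟩, ⟨b, a⟩} : Finset _).card :=
            Finset.card_le_card hsub
        _ ≤ 2 := by
            apply (Finset.card_insert_le _ _).trans
            simp
  have h2 : F.card ≤ 2 * (F.image f).card := Finset.card_le_mul_card_image F 2 hfib
  calc ∑ v ∈ T, H.degree v = F.card := hcard.symm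
    _ ≤ 2 * (F.image f).card := h2
    _ ≤ 2 * (edgesIn ω U).card := by
        exact Nat.mul_le_mul_left 2 (Finset.card_le_card himg)

/-- Key deterministic lemma: the sparseness event implies expansion. -/
lemma key_expansion {n : ℕ} {η d p c β : ℝ} (hd : 0 < d) (hη : 0 < η) (hp : 0 < p)
    (hn : 0 < n) (hβ : β = η / (2 * (1 + d)))
    (ω : Sym2 (Fin n) → Bool)
    (hGood : ∀ U : Finset (Fin n), U.Nonempty → (U.card : ℝ) ≤ (1 + d) * c * n →
      ((edgesIn ω U).card : ℝ) ≤ β * p * n * U.card)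
    (H : SimpleGraph (Fin n)) (hH : H ≤ graphOf ω)
    (T : Finset (Fin n)) (hT : T.Nonempty) (hTc : (T.card : ℝ) ≤ c * n)
    (hdeg : ∀ v ∈ T, η * p * n ≤ (H.degree v : ℝ)) :
    d * T.card ≤ ((extNbhd H T).card : ℝ) := by
  classical
  by_contra hcon
  push_neg at hcon
  set U := T ∪ extNbhd H T with hU
  have hd1 : (0:ℝ) < 1 + d := by linarith
  have ht1 : (1:ℝ) ≤ T.card := by exact_mod_cast Finset.card_pos.2 hT
  have hUcard : (U.card : ℝ) < (1 + d) * T.card := by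
    have h1 : U.card ≤ T.card + (extNbhd H T).card := Finset.card_union_le _ _
    have h2 : (U.card : ℝ) ≤ T.card + (extNbhd H T).card := by exact_mod_cast h1
    nlinarith
  have hUcn : (U.card : ℝ) ≤ (1 + d) * c * n := by
    have : (1 + d) * (T.card : ℝ) ≤ (1 + d) * (c * n) :=
      mul_le_mul_of_nonneg_left hTc hd1.le
    calc (U.card : ℝ) ≤ (1 + d) * T.card := hUcard.le
      _ ≤ (1 + d) * (c * n) := this
      _ = (1 + d) * c * n := by ring
  have hUne : U.Nonempty := hT.mono Finset.subset_union_left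
  have hGoodU := hGood U hUne hUcn
  -- lower bound on sum of degrees
  have hsum : ∑ v ∈ T, H.degree v ≤ 2 * (edgesIn ω U).card := by
    apply sum_degree_le ω H hH T U Finset.subset_union_left
    intro v hv w hadj
    by_cases hw : w ∈ T
    · exact Finset.mem_union_left _ hw
    · apply Finset.mem_union_right
      simp only [extNbhd, Finset.mem_filter, Finset.mem_univ, true_and]
      exact ⟨hw, v, hv, hadj⟩
  have hlow : (T.card : ℝ) * (η * p * n) ≤ ∑ v ∈ T, (H.degree v : ℝ) := by
    calc (T.card : ℝ) * (η * p * n) = ∑ _v ∈ T, (η * p * n) := by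
          rw [Finset.sum_const, nsmul_eq_mul]
      _ ≤ ∑ v ∈ T, (H.degree v : ℝ) := Finset.sum_le_sum hdeg
  have hcast : ∑ v ∈ T, (H.degree v : ℝ) = ((∑ v ∈ T, H.degree v : ℕ) : ℝ) := by
    push_cast; ring
  have hβpn : (0:ℝ) < β * p * n := by
    have : (0:ℝ) < β := by rw [hβ]; positivity
    have hn' : (0:ℝ) < n := by exact_mod_cast hn
    positivity
  have hup : ((edgesIn ω U).card : ℝ) < β * p * n * ((1 + d) * T.card) := by
    calc ((edgesIn ω U).card : ℝ) ≤ β * p * n * U.card := hGoodU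
      _ < β * p * n * ((1 + d) * T.card) := by
          exact mul_lt_mul_of_pos_left hUcard hβpn
  have hid : β * p * n * ((1 + d) * T.card) * 2 = (T.card : ℝ) * (η * p * n) := by
    rw [hβ]; field_simp
  have h2e : (T.card : ℝ) * (η * p * n) ≤ 2 * (edgesIn ω U).card := by
    calc (T.card : ℝ) * (η * p * n) ≤ ∑ v ∈ T, (H.degree v : ℝ) := hlow
      _ = ((∑ v ∈ T, H.degree v : ℕ) : ℝ) := hcast
      _ ≤ ((2 * (edgesIn ω U).card : ℕ) : ℝ) := by exact_mod_cast hsum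
      _ = 2 * (edgesIn ω U).card := by push_cast; ring
  nlinarith

instance gnp_prob (N : ℕ) (p : ℝ) : IsProbabilityMeasure (gnp N p) := by
  unfold gnp; infer_instance

lemma badU_measure (n : ℕ) (p : ℝ) (hp1 : p ≤ 1) (U : Finset (Fin n)) (k : ℕ) :
    gnp n p {ω | k ≤ (edgesIn ω U).card} ≤
      (((pairsIn U).card.choose k : ℕ) : ℝ≥0∞) * ENNReal.ofReal p ^ k := by
  have hsub : {ω : Sym2 (Fin n) → Bool | k ≤ (edgesIn ω U).card} ⊆
      ⋃ E ∈ (pairsIn U).powersetCard k, {ω | ∀ e ∈ E, ω e = true} := by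
    intro ω hω
    obtain ⟨E, hE, hEcard⟩ := Finset.exists_subset_card_eq hω
    have hmem : E ∈ (pairsIn U).powersetCard k :=
      Finset.mem_powersetCard.2 ⟨hE.trans (edgesIn_subset_pairsIn ω U), hEcard⟩
    have hall : ω ∈ {ω : Sym2 (Fin n) → Bool | ∀ e ∈ E, ω e = true} := by
      intro e he
      have := hE he
      simp only [edgesIn, Finset.mem_filter] at this
      exact this.2.1
    exact Set.mem_biUnion hmem hall
  calc gnp n p {ω | k ≤ (edgesIn ω U).card}
      ≤ gnp n p (⋃ E ∈ (pairsIn U).powersetCard k, {ω | ∀ e ∈ E, ω e = true}) :=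
        measure_mono hsub
    _ ≤ ∑ E ∈ (pairsIn U).powersetCard k, gnp n p {ω | ∀ e ∈ E, ω e = true} :=
        measure_biUnion_finset_le _ _
    _ ≤ ∑ E ∈ (pairsIn U).powersetCard k, ENNReal.ofReal p ^ k := by
        apply Finset.sum_le_sum
        intro E hE
        have hc := (Finset.mem_powersetCard.1 hE).2
        calc gnp n p {ω | ∀ e ∈ E, ω e = true} ≤ ENNReal.ofReal p ^ E.card :=
              cyl_measure n p hp1 E
          _ = ENNReal.ofReal p ^ k := by rw [hc]
    _ = (((pairsIn U).card.choose k : ℕ) : ℝ≥0∞) * ENNReal.ofReal p ^ k := by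
        rw [Finset.sum_const, Finset.card_powersetCard, nsmul_eq_mul]

lemma geom_tail_bound (D n : ℕ) (hn : 0 < n) :
    ∑ u ∈ Finset.Icc 1 D, ((u : ℝ) / (2 * n)) * (1 / 4) ^ (u - 1) ≤ 1 / n := by
  have hn' : (0:ℝ) < n := by exact_mod_cast hn
  have hterm : ∀ u ∈ Finset.Icc 1 D,
      ((u : ℝ) / (2 * n)) * (1 / 4) ^ (u - 1) ≤ (1 / (2 * (n:ℝ))) * (1 / 2) ^ (u - 1) := by
    intro u hu
    have h2 : (u : ℝ) ≤ 2 ^ (u - 1) := by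
      have := Nat.lt_two_pow_self (n := u - 1)
      have h1u : 1 ≤ u := (Finset.mem_Icc.1 hu).1
      have : u ≤ 2 ^ (u - 1) := by
        have := Nat.lt_two_pow_self (n := u - 1)
        omega
      exact_mod_cast this
    have : ((u : ℝ)) * (1 / 4) ^ (u - 1) ≤ (1 / 2) ^ (u - 1) := by
      calc ((u : ℝ)) * (1 / 4) ^ (u - 1) ≤ (2 : ℝ) ^ (u - 1) * (1 / 4) ^ (u - 1) := by
            apply mul_le_mul_of_nonneg_right h2 (by positivity)
        _ = (1 / 2) ^ (u - 1) := by
            rw [← mul_pow]; norm_num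
    calc ((u : ℝ) / (2 * n)) * (1 / 4) ^ (u - 1)
        = (1 / (2 * (n:ℝ))) * ((u : ℝ) * (1 / 4) ^ (u - 1)) := by ring
      _ ≤ (1 / (2 * (n:ℝ))) * (1 / 2) ^ (u - 1) := by
          apply mul_le_mul_of_nonneg_left this (by positivity)
  calc ∑ u ∈ Finset.Icc 1 D, ((u : ℝ) / (2 * n)) * (1 / 4) ^ (u - 1)
      ≤ ∑ u ∈ Finset.Icc 1 D, (1 / (2 * (n:ℝ))) * (1 / 2) ^ (u - 1) := Finset.sum_le_sum hterm
    _ = (1 / (2 * (n:ℝ))) * ∑ u ∈ Finset.Icc 1 D, ((1:ℝ) / 2) ^ (u - 1) := by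
        rw [Finset.mul_sum]
    _ ≤ (1 / (2 * (n:ℝ))) * 2 := by
        apply mul_le_mul_of_nonneg_left _ (by positivity)
        have : ∑ u ∈ Finset.Icc 1 D, ((1:ℝ) / 2) ^ (u - 1)
            = ∑ i ∈ Finset.range D, ((1:ℝ) / 2) ^ i := by
          rw [← Finset.Ico_add_one_right_eq_Icc, Finset.sum_Ico_eq_sum_range]
          simp
        rw [this]
        exact sum_geometric_two_le D
    _ = 1 / n := by field_simp

set_option maxHeartbeats 2000000 in
/-- Expansion from minimum degree. For all `η, d > 0` there are
`C, c > 0` such that w.h.p. for `G = G(n,p)` with `p ≥ C/n`: every subgraph of `G` with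
minimum degree at least `ηpn` is a `(cn,d)`-expander, and every bipartite subgraph of `G`
with minimum degree at least `ηpn` is a `(cn,d)`-bipartite-expander. -/
theorem expansion_from_min_degree (η d : ℝ) (hη : 0 < η) (hd : 0 < d) :
    ∃ C c : ℝ, 0 < C ∧ 0 < c ∧
    ∀ ε : ℝ, 0 < ε → ∃ n₀ : ℕ, ∀ n : ℕ, n₀ ≤ n → ∀ p : ℝ, C / n ≤ p → p ≤ 1 →
    ENNReal.ofReal (1 - ε) ≤ gnp n p {ω |
      (∀ (H : SimpleGraph (Fin n)) (S : Finset (Fin n)),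
        H ≤ graphOf ω →
        (∀ u v, H.Adj u v → u ∈ S ∧ v ∈ S) →
        (∀ v ∈ S, η * p * n ≤ (H.degree v : ℝ)) →
        IsExpanderOn H S (c * n) d) ∧
      (∀ (H : SimpleGraph (Fin n)) (V1 V2 : Finset (Fin n)),
        H ≤ graphOf ω →
        Disjoint V1 V2 →
        (∀ u v, H.Adj u v → (u ∈ V1 ∧ v ∈ V2) ∨ (u ∈ V2 ∧ v ∈ V1)) →
        (∀ v ∈ V1 ∪ V2, η * p * n ≤ (H.degree v : ℝ)) →
        IsBipExpanderOn H V1 V2 (c * n) d)} := by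
  classical
  -- abbreviations
  set β : ℝ := η / (2 * (1 + d)) with hβ
  have hd1 : (0:ℝ) < 1 + d := by linarith
  have hβ0 : 0 < β := by rw [hβ]; positivity
  set c0 : ℝ := min (min (β ^ 3 / 162) (1 / 2)) (β / 3) with hc0def
  have hc00 : 0 < c0 := by
    apply lt_min (lt_min (by positivity) (by norm_num)) (by positivity)
  have hc0a : c0 ≤ β ^ 3 / 162 := (min_le_left _ _).trans (min_le_left _ _)
  have hc0b : c0 ≤ 1 / 2 := (min_le_left _ _).trans (min_le_right _ _)
  have hc0c : c0 ≤ β / 3 := min_le_right _ _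
  refine ⟨3 / β, c0 / (1 + d), by positivity, by positivity, ?_⟩
  set c : ℝ := c0 / (1 + d) with hcdef
  have h1dc : (1 + d) * c = c0 := by rw [hcdef]; field_simp
  intro ε hε
  refine ⟨max 1 ⌈1 / ε⌉₊, ?_⟩
  intro n hn₀ p hpC hp1
  have hn1 : 1 ≤ n := le_trans (le_max_left _ _) hn₀
  have hn : 0 < n := hn1
  have hn' : (0:ℝ) < n := by exact_mod_cast hn
  have hp0 : 0 < p := lt_of_lt_of_le (by positivity) hpC
  have hpn : 3 / β ≤ p * n := by
    rw [div_le_iff₀ hn'] at hpC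
    linarith
  have hβpn3 : 3 ≤ β * (p * n) := by
    have := mul_le_mul_of_nonneg_left hpn hβ0.le
    calc (3:ℝ) = β * (3 / β) := by field_simp
      _ ≤ β * (p * n) := this
  have hβpn0 : (0:ℝ) < β * p * n := by positivity
  -- the "good" sparseness event
  set G₀ : Set (Sym2 (Fin n) → Bool) := {ω | ∀ U : Finset (Fin n), U.Nonempty →
    (U.card : ℝ) ≤ (1 + d) * c * n → ((edgesIn ω U).card : ℝ) ≤ β * p * n * U.card}
    with hG₀def
  -- the bad event and its union-bound decomposition
  set kk : Finset (Fin n) → ℕ := fun U => ⌊β * p * n * U.card⌋₊ + 1 with hkk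
  set 𝒰 : Finset (Finset (Fin n)) := Finset.univ.powerset.filter
    (fun U => U.Nonempty ∧ (U.card : ℝ) ≤ (1 + d) * c * n) with h𝒰
  set Bad : Set (Sym2 (Fin n) → Bool) :=
    ⋃ U ∈ 𝒰, {ω | kk U ≤ (edgesIn ω U).card} with hBad
  -- complement of Bad is inside G₀
  have hcompl : Badᶜ ⊆ G₀ := by
    intro ω hω
    intro U hUne hUcard
    by_contra hcon
    push_neg at hcon
    have hUmem : U ∈ 𝒰 := by
      rw [h𝒰, Finset.mem_filter]
      exact ⟨Finset.mem_powerset.2 (Finset.subset_univ U), hUne, hUcard⟩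
    have hk : kk U ≤ (edgesIn ω U).card := by
      simp only [hkk]
      have : ⌊β * p * n * U.card⌋₊ < (edgesIn ω U).card :=
        (Nat.floor_lt (by positivity)).2 hcon
      omega
    exact hω (Set.mem_biUnion hUmem hk)
  -- G₀ implies the desired expansion properties
  have hG₀sub : G₀ ⊆ {ω |
      (∀ (H : SimpleGraph (Fin n)) (S : Finset (Fin n)),
        H ≤ graphOf ω →
        (∀ u v, H.Adj u v → u ∈ S ∧ v ∈ S) →
        (∀ v ∈ S, η * p * n ≤ (H.degree v : ℝ)) →
        IsExpanderOn H S (c * n) d) ∧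
      (∀ (H : SimpleGraph (Fin n)) (V1 V2 : Finset (Fin n)),
        H ≤ graphOf ω →
        Disjoint V1 V2 →
        (∀ u v, H.Adj u v → (u ∈ V1 ∧ v ∈ V2) ∨ (u ∈ V2 ∧ v ∈ V1)) →
        (∀ v ∈ V1 ∪ V2, η * p * n ≤ (H.degree v : ℝ)) →
        IsBipExpanderOn H V1 V2 (c * n) d)} := by
    intro ω hω
    constructor
    · intro H S hHsub hS hdeg T hTS hTne hTcard
      exact key_expansion hd hη hp0 hn hβ ω hω H hHsub T hTne hTcard
        (fun v hv => hdeg v (hTS hv))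
    · intro H V1 V2 hHsub hdisj hbip hdeg T hTV hTne hTcard
      have hTsub : T ⊆ V1 ∪ V2 := by
        rcases hTV with h | h
        · exact h.trans Finset.subset_union_left
        · exact h.trans Finset.subset_union_right
      exact key_expansion hd hη hp0 hn hβ ω hω H hHsub T hTne hTcard
        (fun v hv => hdeg v (hTsub hv))
  -- bound the measure of Bad
  have hμBad : gnp n p Bad ≤ ENNReal.ofReal ε := by
    set D : ℕ := ⌊(1 + d) * c * n⌋₊ with hD
    set F : ℕ → ℝ := fun u => (3 * u / (β * n)) ^ (3 * u) with hF
    have hF0 : ∀ u : ℕ, 0 ≤ F u := by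
      intro u; simp only [hF]; positivity
    -- per-set bound
    have hperU : ∀ U ∈ 𝒰, gnp n p {ω | kk U ≤ (edgesIn ω U).card}
        ≤ ENNReal.ofReal (F U.card) := by
      intro U hU
      rw [h𝒰, Finset.mem_filter] at hU
      obtain ⟨-, hUne, hUcard⟩ := hU
      set u : ℕ := U.card with hu
      set M : ℕ := (pairsIn U).card with hM
      set k : ℕ := kk U with hk
      have hu1 : 1 ≤ u := Finset.card_pos.2 hUne
      have hu0 : (0:ℝ) < u := by exact_mod_cast hu1
      have hucn : (u : ℝ) ≤ c0 * n := by rw [← h1dc]; exact hUcard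
      set q : ℝ := 3 * u / (β * n) with hq
      have hq0 : 0 ≤ q := by positivity
      have hq1 : q ≤ 1 := by
        rw [hq, div_le_one (by positivity)]
        have : (u:ℝ) ≤ (β / 3) * n := le_trans hucn (by nlinarith)
        nlinarith
      have hkx : β * p * n * u < k := by
        rw [hk, hkk]
        push_cast
        exact Nat.lt_floor_add_one _
      have hk0 : (0:ℝ) < k := lt_trans (by positivity) hkx
      have h3uk : 3 * u ≤ k := by
        have h1 : ((3 * u : ℕ) : ℝ) ≤ β * p * n * u := by
          push_cast
          nlinarith
        have : ((3 * u : ℕ) : ℝ) < k := lt_of_le_of_lt h1 hkx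
        exact_mod_cast this.le
      have hMu : (M : ℝ) ≤ (u:ℝ) * u := by
        rw [hM, hu]
        exact_mod_cast pairsIn_card_le U
      -- real inequality
      have hreal : (M.choose k : ℝ) * p ^ k ≤ q ^ (3 * u) := by
        have hchoose : (M.choose k : ℝ) ≤ (3 * M) ^ k / (k:ℝ) ^ k := by
          rw [le_div_iff₀ (by positivity)]
          exact choose_mul_pow_le M k
        have hbase : 3 * M * p / k ≤ q := by
          rw [hq]
          have hnum : 3 * (M:ℝ) * p ≤ 3 * ((u:ℝ) * u) * p := by nlinarith
          have h1 : 3 * (M:ℝ) * p / k ≤ 3 * ((u:ℝ) * u) * p / (β * p * n * u) := by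
            apply div_le_div₀ (by positivity) hnum (by positivity) hkx.le
          calc 3 * (M:ℝ) * p / k ≤ 3 * ((u:ℝ) * u) * p / (β * p * n * u) := h1
            _ = 3 * u / (β * n) := by field_simp
        calc (M.choose k : ℝ) * p ^ k ≤ ((3 * M) ^ k / (k:ℝ) ^ k) * p ^ k := by
              apply mul_le_mul_of_nonneg_right hchoose (by positivity)
          _ = (3 * M * p / k) ^ k := by rw [div_pow, mul_pow]; ring
          _ ≤ q ^ k := pow_le_pow_left₀ (by positivity) hbase k
          _ ≤ q ^ (3 * u) := pow_le_pow_of_le_one hq0 hq1 h3uk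
      calc gnp n p {ω | kk U ≤ (edgesIn ω U).card}
          ≤ ((M.choose k : ℕ) : ℝ≥0∞) * ENNReal.ofReal p ^ k := badU_measure n p hp1 U k
        _ = ENNReal.ofReal ((M.choose k : ℝ) * p ^ k) := by
            rw [ENNReal.ofReal_mul (by positivity), ← ENNReal.ofReal_pow hp0.le,
              ENNReal.ofReal_natCast]
        _ ≤ ENNReal.ofReal (F U.card) := by
            apply ENNReal.ofReal_le_ofReal
            simp only [hF]
            exact hreal
    -- union bound and grouping by cardinality
    have hsubU : 𝒰 ⊆ (Finset.Icc 1 D).biUnion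
        (fun u => Finset.powersetCard u Finset.univ) := by
      intro U hU
      rw [h𝒰, Finset.mem_filter] at hU
      obtain ⟨-, hUne, hUcard⟩ := hU
      rw [Finset.mem_biUnion]
      refine ⟨U.card, ?_, ?_⟩
      · rw [Finset.mem_Icc]
        exact ⟨Finset.card_pos.2 hUne, Nat.le_floor hUcard⟩
      · exact Finset.mem_powersetCard.2 ⟨Finset.subset_univ U, rfl⟩
    have hdisjU : ((Finset.Icc 1 D) : Set ℕ).PairwiseDisjoint
        (fun u => Finset.powersetCard u (Finset.univ : Finset (Fin n))) := by
      intro a _ b _ hab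
      simp only [Function.onFun]
      rw [Finset.disjoint_left]
      intro X hXa hXb
      have h1 := (Finset.mem_powersetCard.1 hXa).2
      have h2 := (Finset.mem_powersetCard.1 hXb).2
      exact hab (h1 ▸ h2 ▸ rfl)
    have hstep : gnp n p Bad ≤ ENNReal.ofReal (∑ u ∈ Finset.Icc 1 D,
        (n.choose u : ℝ) * F u) := by
      calc gnp n p Bad ≤ ∑ U ∈ 𝒰, gnp n p {ω | kk U ≤ (edgesIn ω U).card} := by
            rw [hBad]
            exact measure_biUnion_finset_le _ _
        _ ≤ ∑ U ∈ 𝒰, ENNReal.ofReal (F U.card) := Finset.sum_le_sum hperU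
        _ ≤ ∑ U ∈ (Finset.Icc 1 D).biUnion (fun u => Finset.powersetCard u Finset.univ),
              ENNReal.ofReal (F U.card) := by
            apply Finset.sum_le_sum_of_subset hsubU
        _ = ∑ u ∈ Finset.Icc 1 D, ∑ U ∈ Finset.powersetCard u (Finset.univ : Finset (Fin n)),
              ENNReal.ofReal (F U.card) := Finset.sum_biUnion hdisjU
        _ = ∑ u ∈ Finset.Icc 1 D, (n.choose u : ℝ≥0∞) * ENNReal.ofReal (F u) := by
            apply Finset.sum_congr rfl
            intro u hu
            have : ∀ U ∈ Finset.powersetCard u (Finset.univ : Finset (Fin n)),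
                ENNReal.ofReal (F U.card) = ENNReal.ofReal (F u) := by
              intro U hU
              rw [(Finset.mem_powersetCard.1 hU).2]
            rw [Finset.sum_congr rfl this, Finset.sum_const, Finset.card_powersetCard,
              Finset.card_univ, Fintype.card_fin, nsmul_eq_mul]
        _ = ENNReal.ofReal (∑ u ∈ Finset.Icc 1 D, (n.choose u : ℝ) * F u) := by
            rw [ENNReal.ofReal_sum_of_nonneg]
            · apply Finset.sum_congr rfl
              intro u _
              rw [ENNReal.ofReal_mul (by positivity), ENNReal.ofReal_natCast]
            · intro u _
              have := hF0 u
              positivity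
    -- real-number estimate of the sum
    have hrsum : ∑ u ∈ Finset.Icc 1 D, (n.choose u : ℝ) * F u ≤ ε := by
      have hterm : ∀ u ∈ Finset.Icc 1 D,
          (n.choose u : ℝ) * F u ≤ ((u:ℝ) / (2 * n)) * (1 / 4) ^ (u - 1) := by
        intro u hu
        rw [Finset.mem_Icc] at hu
        obtain ⟨hu1, huD⟩ := hu
        have hu0 : (0:ℝ) < u := by exact_mod_cast hu1
        have hucn : (u : ℝ) ≤ c0 * n := by
          calc (u : ℝ) ≤ D := by exact_mod_cast huD
            _ ≤ (1 + d) * c * n := Nat.floor_le (by positivity)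
            _ = c0 * n := by rw [← h1dc]
        have hchoose : (n.choose u : ℝ) ≤ (3 * n) ^ u / (u:ℝ) ^ u := by
          rw [le_div_iff₀ (by positivity)]
          exact choose_mul_pow_le n u
        have hq3 : (3 * (u:ℝ) / (β * n)) ^ (3 * u) = ((3 * (u:ℝ) / (β * n)) ^ 3) ^ u := by
          rw [← pow_mul, mul_comm 3 u]
        have hbase : (3 * (n:ℝ) / u) * (3 * (u:ℝ) / (β * n)) ^ 3 ≤ (u:ℝ) / (2 * n) := by
          have hβn : (0:ℝ) < β * n := by positivity
          have h162 : 162 * (u:ℝ) ≤ β ^ 3 * n := by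
            have : (u:ℝ) ≤ (β ^ 3 / 162) * n := le_trans hucn (by nlinarith)
            nlinarith
          have hkey : (3 * (n:ℝ) / u) * (3 * (u:ℝ) / (β * n)) ^ 3
              = 81 * u ^ 2 / (β ^ 3 * n ^ 2) := by
            field_simp
            ring
          rw [hkey, div_le_div_iff₀ (by positivity) (by positivity)]
          nlinarith [mul_le_mul_of_nonneg_right h162 (mul_pos hu0 hn').le]
        have hfrac14 : (u:ℝ) / (2 * n) ≤ 1 / 4 := by
          have : (u:ℝ) ≤ (1/2) * n := le_trans hucn (by nlinarith)
          rw [div_le_div_iff₀ (by positivity) (by norm_num)]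
          nlinarith
        calc (n.choose u : ℝ) * F u ≤ ((3 * n) ^ u / (u:ℝ) ^ u) * F u := by
              apply mul_le_mul_of_nonneg_right hchoose (hF0 u)
          _ = ((3 * (n:ℝ) / u) * (3 * (u:ℝ) / (β * n)) ^ 3) ^ u := by
              rw [show F u = ((3 * (u:ℝ) / (β * ↑n)) ^ 3) ^ u from by
                simp only [hF]; exact hq3]
              simp only [mul_pow, div_pow]
          _ ≤ ((u:ℝ) / (2 * n)) ^ u := by
              apply pow_le_pow_left₀ (by positivity) hbase
          _ = ((u:ℝ) / (2 * n)) * ((u:ℝ) / (2 * n)) ^ (u - 1) := by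
              rw [← pow_succ', Nat.sub_add_cancel hu1]
          _ ≤ ((u:ℝ) / (2 * n)) * (1 / 4) ^ (u - 1) := by
              apply mul_le_mul_of_nonneg_left _ (by positivity)
              exact pow_le_pow_left₀ (by positivity) hfrac14 _
      have hεn : 1 / (n:ℝ) ≤ ε := by
        have hceil : (⌈1 / ε⌉₊ : ℝ) ≤ n := by
          exact_mod_cast le_trans (le_max_right 1 ⌈1 / ε⌉₊) hn₀
        have h1ε : 1 / ε ≤ (n:ℝ) := le_trans (Nat.le_ceil _) hceil
        rw [div_le_iff₀ hn']
        rw [div_le_iff₀ hε] at h1ε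
        nlinarith
      calc ∑ u ∈ Finset.Icc 1 D, (n.choose u : ℝ) * F u
          ≤ ∑ u ∈ Finset.Icc 1 D, ((u:ℝ) / (2 * n)) * (1 / 4) ^ (u - 1) :=
            Finset.sum_le_sum hterm
        _ ≤ 1 / n := geom_tail_bound D n hn
        _ ≤ ε := hεn
    exact le_trans hstep (ENNReal.ofReal_le_ofReal hrsum)
  -- put everything together
  have h1 : ENNReal.ofReal (1 - ε) = 1 - ENNReal.ofReal ε := by
    rw [ENNReal.ofReal_sub 1 hε.le, ENNReal.ofReal_one]
  have h2 : (1 : ℝ≥0∞) - gnp n p Bad ≤ gnp n p Badᶜ := by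
    rw [tsub_le_iff_left]
    calc (1 : ℝ≥0∞) = gnp n p Set.univ := measure_univ.symm
      _ = gnp n p (Bad ∪ Badᶜ) := by rw [Set.union_compl_self]
      _ ≤ gnp n p Bad + gnp n p Badᶜ := measure_union_le _ _
  calc ENNReal.ofReal (1 - ε) = 1 - ENNReal.ofReal ε := h1
    _ ≤ 1 - gnp n p Bad := tsub_le_tsub_left hμBad 1
    _ ≤ gnp n p Badᶜ := h2
    _ ≤ _ := measure_mono (hcompl.trans hG₀sub)
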